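/- If q is odd, then a planar arc in PG(2, q) has size at most q + 1. -/

import Mathlib

open Module Projectivization
open scoped LinearAlgebra.Projectivization

section CardProj

variable {F : Type*} [Field F]

/-- The nonzero vectors biject with `ℙ F V × Fˣ`. -/
noncomputable def projUnitsEquiv (V : Type*) [AddCommGroup V] [Module F V] :
    (ℙ F V) × Fˣ ≃ { v : V // v ≠ 0 } := by
  refine Equiv.ofBijective
    (fun x => ⟨(x.2 : F) • x.1.rep, smul_ne_zero (Units.ne_zero x.2) x.1.rep_nonzero⟩) ⟨?_, ?_⟩
  · rintro ⟨x, a⟩ ⟨y, b⟩ h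
    have h' : (a : F) • x.rep = (b : F) • y.rep := congrArg Subtype.val h
    have hx : Projectivization.mk F ((a : F) • x.rep)
        (smul_ne_zero (Units.ne_zero a) x.rep_nonzero) = x := by
      conv_rhs => rw [← x.mk_rep]
      rw [Projectivization.mk_eq_mk_iff']
      exact ⟨a, rfl⟩
    have hy : Projectivization.mk F ((b : F) • y.rep)
        (smul_ne_zero (Units.ne_zero b) y.rep_nonzero) = y := by
      conv_rhs => rw [← y.mk_rep]
      rw [Projectivization.mk_eq_mk_iff']
      exact ⟨b, rfl⟩
    have hxy : x = y := by rw [← hx, ← hy]; congr 1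
    subst hxy
    have hab : (a : F) = (b : F) := by
      by_contra hab
      have : ((a : F) - b) • x.rep = 0 := by rw [sub_smul, h', sub_self]
      rcases smul_eq_zero.mp this with h0 | h0
      · exact hab (sub_eq_zero.mp h0)
      · exact x.rep_nonzero h0
    simp [Prod.ext_iff, Units.ext_iff, hab]
  · rintro ⟨v, hv⟩
    have : Projectivization.mk F (Projectivization.mk F v hv).rep
        (Projectivization.rep_nonzero _) = Projectivization.mk F v hv := mk_rep _
    rw [Projectivization.mk_eq_mk_iff] at this
    obtain ⟨a, ha⟩ := this
    exact ⟨⟨Projectivization.mk F v hv, a⁻¹⟩, by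
      apply Subtype.ext
      simp only []
      rw [← ha]
      simp [Units.smul_def, smul_smul]⟩

lemma nat_card_nonzero (V : Type*) [AddCommGroup V] [Module F V] [Finite V] :
    Nat.card { v : V // v ≠ 0 } = Nat.card V - 1 := by
  classical
  haveI : Fintype V := Fintype.ofFinite V
  rw [Nat.card_eq_fintype_card, Nat.card_eq_fintype_card]
  have h1 : Fintype.card { v : V // ¬ (v = 0) } = Fintype.card V - Fintype.card {v : V // v = 0} :=
    Fintype.card_subtype_compl _
  have h2 : Fintype.card {v : V // v = 0} = 1 := Fintype.card_subtype_eq (0 : V)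
  simp only [ne_eq]
  rw [h1, h2]

lemma nat_card_proj_mul (V : Type*) [AddCommGroup V] [Module F V] [Finite V] [Fintype F] :
    Nat.card (ℙ F V) * (Fintype.card F - 1) = Nat.card V - 1 := by
  classical
  have h := Nat.card_congr (projUnitsEquiv (F := F) V)
  rw [Nat.card_prod, nat_card_nonzero (F := F)] at h
  rw [← h]
  congr 1
  rw [Nat.card_eq_fintype_card]
  exact (Fintype.card_units (α := F)).symm

lemma nat_card_proj_of_finrank_two (V : Type*) [AddCommGroup V] [Module F V] [Finite V]
    [Fintype F] (h2 : finrank F V = 2) :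
    Nat.card (ℙ F V) = Fintype.card F + 1 := by
  classical
  haveI : Fintype V := Fintype.ofFinite V
  set q := Fintype.card F with hq
  have hq2 : 2 ≤ q := Fintype.one_lt_card
  have hcV : Nat.card V = q ^ 2 := by
    rw [Nat.card_eq_fintype_card, card_eq_pow_finrank (K := F), h2]
  have h := nat_card_proj_mul (F := F) V
  rw [hcV] at h
  have key : (q + 1) * (q - 1) = q ^ 2 - 1 := by
    have := Nat.sq_sub_sq q 1
    simpa using this.symm
  rw [← key] at h
  exact Nat.eq_of_mul_eq_mul_right (by omega) h

end CardProj
section Geometry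

variable {F : Type*} [Field F]

lemma dep3_iff {V : Type*} [AddCommGroup V] [Module F V] (a b c : V) :
    ¬ LinearIndependent F ![a, b, c] ↔
      ∃ x y z : F, x • a + y • b + z • c = 0 ∧ (x ≠ 0 ∨ y ≠ 0 ∨ z ≠ 0) := by
  rw [Fintype.not_linearIndependent_iff]
  constructor
  · rintro ⟨g, hg, i, hi⟩
    refine ⟨g 0, g 1, g 2, ?_, ?_⟩
    · simpa [Fin.sum_univ_three] using hg
    · fin_cases i <;> tauto
  · rintro ⟨x, y, z, h, hne⟩
    refine ⟨![x, y, z], ?_, ?_⟩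
    · simpa [Fin.sum_univ_three] using h
    · rcases hne with h | h | h
      exacts [⟨0, h⟩, ⟨1, h⟩, ⟨2, h⟩]

lemma dep3_rotate {V : Type*} [AddCommGroup V] [Module F V] {a b c : V}
    (h : ¬ LinearIndependent F ![a, b, c]) : ¬ LinearIndependent F ![b, c, a] := by
  rw [dep3_iff] at h ⊢
  obtain ⟨x, y, z, hs, hn⟩ := h
  exact ⟨y, z, x, by rw [← hs]; abel, by tauto⟩

lemma dep3_swap02 {V : Type*} [AddCommGroup V] [Module F V] {a b c : V}
    (h : ¬ LinearIndependent F ![a, b, c]) : ¬ LinearIndependent F ![c, b, a] := by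
  rw [dep3_iff] at h ⊢
  obtain ⟨x, y, z, hs, hn⟩ := h
  exact ⟨z, y, x, by rw [← hs]; abel, by tauto⟩

lemma rep_not_mem_span {P R : ℙ F (Fin 3 → F)} (h : R ≠ P) :
    R.rep ∉ Submodule.span F {P.rep} := by
  intro hmem
  rw [Submodule.mem_span_singleton] at hmem
  obtain ⟨a, ha⟩ := hmem
  apply h
  conv_lhs => rw [← R.mk_rep]
  conv_rhs => rw [← P.mk_rep]
  rw [Projectivization.mk_eq_mk_iff']
  exact ⟨a, ha⟩

lemma finrank_quot (P : ℙ F (Fin 3 → F)) :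
    finrank F ((Fin 3 → F) ⧸ Submodule.span F {P.rep}) = 2 := by
  have h := Submodule.finrank_quotient_add_finrank (Submodule.span F {P.rep})
  rw [finrank_span_singleton P.rep_nonzero] at h
  have h3 : finrank F (Fin 3 → F) = 3 := by simp
  omega

instance quotNontrivial (P : ℙ F (Fin 3 → F)) :
    Nontrivial ((Fin 3 → F) ⧸ Submodule.span F {P.rep}) :=
  Module.nontrivial_of_finrank_pos (R := F) (by rw [finrank_quot]; omega)

lemma mkQ_rep_ne_zero {P R : ℙ F (Fin 3 → F)} (h : R ≠ P) :
    (Submodule.span F {P.rep}).mkQ R.rep ≠ 0 := by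
  rw [Submodule.mkQ_apply, ne_eq, Submodule.Quotient.mk_eq_zero]
  exact rep_not_mem_span h

/-- The pencil of lines through `P`, as the projectivization of the quotient. -/
noncomputable def phi (P R : ℙ F (Fin 3 → F)) :
    ℙ F ((Fin 3 → F) ⧸ Submodule.span F {P.rep}) :=
  letI := Classical.dec ((Submodule.span F {P.rep}).mkQ R.rep = 0)
  if h : (Submodule.span F {P.rep}).mkQ R.rep = 0 then Classical.arbitrary _
  else Projectivization.mk F _ h

lemma phi_apply {P R : ℙ F (Fin 3 → F)} (h : R ≠ P) :
    phi P R = Projectivization.mk F _ (mkQ_rep_ne_zero h) := by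
  unfold phi
  rw [dif_neg (mkQ_rep_ne_zero h)]

lemma phi_eq_iff {P R S : ℙ F (Fin 3 → F)} (hR : R ≠ P) (hS : S ≠ P) :
    phi P R = phi P S ↔ ¬ LinearIndependent F ![P.rep, R.rep, S.rep] := by
  rw [phi_apply hR, phi_apply hS, Projectivization.mk_eq_mk_iff', dep3_iff]
  constructor
  · rintro ⟨a, ha⟩
    have h0 : (Submodule.span F {P.rep}).mkQ (R.rep - a • S.rep) = 0 := by
      rw [map_sub, map_smul, ha, sub_self]
    rw [Submodule.mkQ_apply, Submodule.Quotient.mk_eq_zero,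
      Submodule.mem_span_singleton] at h0
    obtain ⟨b, hb⟩ := h0
    refine ⟨-b, 1, -a, ?_, Or.inr (Or.inl one_ne_zero)⟩
    rw [neg_smul, neg_smul, one_smul, hb]
    abel
  · rintro ⟨x, y, z, hsum, hne⟩
    have hy : y ≠ 0 := by
      rintro rfl
      rcases eq_or_ne z 0 with rfl | hz
      · have hx : x • P.rep = 0 := by simpa using hsum
        rcases smul_eq_zero.mp hx with h0 | h0
        · tauto
        · exact P.rep_nonzero h0
      · apply rep_not_mem_span hS
        rw [Submodule.mem_span_singleton]
        refine ⟨-(z⁻¹ * x), ?_⟩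
        have : z • S.rep = -(x • P.rep) := by
          rw [eq_neg_iff_add_eq_zero]
          rw [← hsum]; simp; abel
        calc (-(z⁻¹ * x)) • P.rep = z⁻¹ • -(x • P.rep) := by
              simp [mul_smul, smul_neg]
          _ = z⁻¹ • (z • S.rep) := by rw [this]
          _ = S.rep := by rw [smul_smul, inv_mul_cancel₀ hz, one_smul]
    have hz : z ≠ 0 := by
      rintro rfl
      apply rep_not_mem_span hR
      rw [Submodule.mem_span_singleton]
      refine ⟨-(y⁻¹ * x), ?_⟩
      have : y • R.rep = -(x • P.rep) := by
        rw [eq_neg_iff_add_eq_zero]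
        rw [← hsum]; simp; abel
      calc (-(y⁻¹ * x)) • P.rep = y⁻¹ • -(x • P.rep) := by
            simp [mul_smul, smul_neg]
        _ = y⁻¹ • (y • R.rep) := by rw [this]
        _ = R.rep := by rw [smul_smul, inv_mul_cancel₀ hy, one_smul]
    have hp0 : (Submodule.span F {P.rep}).mkQ P.rep = 0 := by
      rw [Submodule.mkQ_apply, Submodule.Quotient.mk_eq_zero]
      exact Submodule.mem_span_singleton_self _
    have h2 : y • (Submodule.span F {P.rep}).mkQ R.rep
        + z • (Submodule.span F {P.rep}).mkQ S.rep = 0 := by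
      have := congrArg (Submodule.span F {P.rep}).mkQ hsum
      simpa [map_add, map_smul, hp0] using this
    refine ⟨-(y⁻¹ * z), ?_⟩
    have h3 : z • (Submodule.span F {P.rep}).mkQ S.rep
        = -(y • (Submodule.span F {P.rep}).mkQ R.rep) := by
      rw [eq_neg_iff_add_eq_zero, add_comm]; exact h2
    calc (-(y⁻¹ * z)) • (Submodule.span F {P.rep}).mkQ S.rep
        = y⁻¹ • -(z • (Submodule.span F {P.rep}).mkQ S.rep) := by
          simp [mul_smul, smul_neg]
      _ = y⁻¹ • (y • (Submodule.span F {P.rep}).mkQ R.rep) := by rw [h3, neg_neg]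
      _ = (Submodule.span F {P.rep}).mkQ R.rep := by
          rw [smul_smul, inv_mul_cancel₀ hy, one_smul]

end Geometry
/-- A set of points of `PG(2, F)` is a planar arc if no three of its points are
collinear, i.e. any three distinct points are independent. -/
def IsArcIn (F : Type*) [Field F] (m : ℕ)
    (A : Set (Projectivization F (Fin m → F))) : Prop :=
  ∀ f : Fin m → Projectivization F (Fin m → F),
    Function.Injective f → (∀ i, f i ∈ A) → Projectivization.Independent f

section Arc

variable {F : Type*} [Field F]

lemma arc_indep {A : Set (ℙ F (Fin 3 → F))} (hA : IsArcIn F 3 A)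
    {P R S : ℙ F (Fin 3 → F)} (hP : P ∈ A) (hR : R ∈ A) (hS : S ∈ A)
    (hPR : P ≠ R) (hPS : P ≠ S) (hRS : R ≠ S) :
    LinearIndependent F ![P.rep, R.rep, S.rep] := by
  have h := hA ![P, R, S] ?_ ?_
  · rw [Projectivization.independent_iff] at h
    have he : Projectivization.rep ∘ ![P, R, S] = ![P.rep, R.rep, S.rep] := by
      funext i; fin_cases i <;> rfl
    rwa [he] at h
  · intro i j hij
    fin_cases i <;> fin_cases j <;> simp_all
  · intro i; fin_cases i <;> assumption

end Arc

/-- if `q` is odd then a planar arc in `PG(2, q)` has at most `q + 1`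
points. -/
theorem planar_arc_card_le_of_odd {F : Type*} [Field F] [Fintype F]
    (hq : Odd (Fintype.card F))
    (A : Set (Projectivization F (Fin 3 → F))) (hA : IsArcIn F 3 A) :
    A.ncard ≤ Fintype.card F + 1 := by
  classical
  set q := Fintype.card F with hqdef
  by_contra hlt
  push_neg at hlt
  haveI : Finite (ℙ F (Fin 3 → F)) := Quotient.finite _
  obtain ⟨B, hBA, hBcard⟩ := Set.exists_subset_card_eq (show q + 2 ≤ A.ncard by omega)
  have hBfin : B.Finite := Set.toFinite B
  have hB : ∀ P R S : ℙ F (Fin 3 → F), P ∈ B → R ∈ B → S ∈ B → P ≠ R → P ≠ S → R ≠ S →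
      LinearIndependent F ![P.rep, R.rep, S.rep] :=
    fun P R S hP hR hS h1 h2 h3 => arc_indep hA (hBA hP) (hBA hR) (hBA hS) h1 h2 h3
  have hq2 : 2 ≤ q := Fintype.one_lt_card
  -- there is a point outside `B`
  obtain ⟨Q, hQ⟩ : ∃ Q : ℙ F (Fin 3 → F), Q ∉ B := by
    by_contra hall
    push_neg at hall
    have hBuniv : B = Set.univ := Set.eq_univ_of_forall hall
    have hcard3 : Nat.card (ℙ F (Fin 3 → F)) * (q - 1) = q ^ 3 - 1 := by
      rw [nat_card_proj_mul]
      congr 1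
      rw [Nat.card_eq_fintype_card, card_eq_pow_finrank (K := F)]
      congr 1
      simp
    rw [hBuniv, Set.ncard_univ] at hBcard
    rw [hBcard] at hcard3
    obtain ⟨k, hk⟩ : ∃ k, q = k + 2 := ⟨q - 2, by omega⟩
    rw [hk] at hcard3
    have h0 : k + 2 - 1 = k + 1 := by omega
    rw [h0] at hcard3
    have h1 : 1 ≤ (k + 2) ^ 3 := Nat.one_le_pow _ _ (by omega)
    have h2 : (k + 2 + 2) * (k + 1) + 1 = (k + 2) ^ 3 := by omega
    nlinarith [h2]
  have hQP : ∀ P ∈ B, P ≠ Q := fun P hP h => hQ (h ▸ hP)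
  -- every point of `B` pairs up with exactly one other point of `B` on a line through `Q`
  have claim2 : ∀ P ∈ B, ∃ R ∈ B, R ≠ P ∧ phi Q R = phi Q P := by
    intro P hP
    haveI : Finite ((Fin 3 → F) ⧸ Submodule.span F {P.rep}) :=
      Finite.of_surjective _ (Submodule.mkQ_surjective (Submodule.span F {P.rep}))
    haveI : Finite (ℙ F ((Fin 3 → F) ⧸ Submodule.span F {P.rep})) := Quotient.finite _
    set g : ↥(B \ {P}) → ℙ F ((Fin 3 → F) ⧸ Submodule.span F {P.rep}) :=
      fun x => phi P x.1 with hgdef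
    have hginj : Function.Injective g := by
      rintro ⟨x, hx⟩ ⟨y, hy⟩ hxy
      obtain ⟨hxB, hxP⟩ := hx
      obtain ⟨hyB, hyP⟩ := hy
      simp only [Set.mem_singleton_iff] at hxP hyP
      by_contra hne
      have hxy' : x ≠ y := fun h => hne (by simp [h])
      have hdep := (phi_eq_iff hxP hyP).mp hxy
      exact hdep (hB P x y hP hxB hyB (Ne.symm hxP) (Ne.symm hyP) hxy')
    have hc1 : Nat.card ↥(B \ {P}) = q + 1 := by
      rw [Nat.card_coe_set_eq, Set.ncard_diff_singleton_of_mem hP, hBcard]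
      omega
    have hc2 : Nat.card (ℙ F ((Fin 3 → F) ⧸ Submodule.span F {P.rep})) = q + 1 :=
      nat_card_proj_of_finrank_two _ (finrank_quot P)
    have hgsurj : Function.Surjective g := by
      haveI : Fintype ↥(B \ {P}) := Fintype.ofFinite _
      haveI : Fintype (ℙ F ((Fin 3 → F) ⧸ Submodule.span F {P.rep})) := Fintype.ofFinite _
      refine ((Fintype.bijective_iff_injective_and_card g).mpr ⟨hginj, ?_⟩).2
      rw [← Nat.card_eq_fintype_card, ← Nat.card_eq_fintype_card, hc1, hc2]
    obtain ⟨⟨R, hR⟩, hphi⟩ := hgsurj (phi P Q)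
    obtain ⟨hRB, hRP⟩ := hR
    simp only [Set.mem_singleton_iff] at hRP
    have hdep : ¬ LinearIndependent F ![P.rep, R.rep, Q.rep] :=
      (phi_eq_iff hRP (Ne.symm (hQP P hP))).mp hphi
    have hdep2 := dep3_swap02 (F := F) hdep
    exact ⟨R, hRB, hRP, (phi_eq_iff (hQP R hRB) (hQP P hP)).mpr hdep2⟩
  -- no three points of `B` on a line through `Q`
  have claim3 : ∀ P1 P2 P3 : ℙ F (Fin 3 → F), P1 ∈ B → P2 ∈ B → P3 ∈ B →
      P1 ≠ P2 → P1 ≠ P3 → P2 ≠ P3 → phi Q P1 = phi Q P2 → phi Q P1 = phi Q P3 → False := by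
    intro P1 P2 P3 h1 h2 h3 h12 h13 h23 e12 e13
    have d12 : ¬ LinearIndependent F ![Q.rep, P1.rep, P2.rep] :=
      (phi_eq_iff (hQP P1 h1) (hQP P2 h2)).mp e12
    have d13 : ¬ LinearIndependent F ![Q.rep, P1.rep, P3.rep] :=
      (phi_eq_iff (hQP P1 h1) (hQP P3 h3)).mp e13
    have r12 : ¬ LinearIndependent F ![P1.rep, P2.rep, Q.rep] := dep3_rotate d12
    have r13 : ¬ LinearIndependent F ![P1.rep, P3.rep, Q.rep] := dep3_rotate d13
    have e2 : phi P1 P2 = phi P1 Q :=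
      (phi_eq_iff (Ne.symm h12) (Ne.symm (hQP P1 h1))).mpr r12
    have e3 : phi P1 P3 = phi P1 Q :=
      (phi_eq_iff (Ne.symm h13) (Ne.symm (hQP P1 h1))).mpr r13
    have e23 : phi P1 P2 = phi P1 P3 := e2.trans e3.symm
    have d23 := (phi_eq_iff (Ne.symm h12) (Ne.symm h13)).mp e23
    exact d23 (hB P1 P2 P3 h1 h2 h3 h12 h13 h23)
  -- counting
  set s : Finset (ℙ F (Fin 3 → F)) := hBfin.toFinset with hsdef
  have hmem : ∀ x, x ∈ s ↔ x ∈ B := fun x => hBfin.mem_toFinset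
  have hscard : s.card = q + 2 := by
    rw [hsdef, ← Set.ncard_eq_toFinset_card B hBfin, hBcard]
  have key : ∀ t ∈ s.image (phi Q), (s.filter (fun R => phi Q R = t)).card = 2 := by
    intro t ht
    obtain ⟨P, hPs, hPt⟩ := Finset.mem_image.mp ht
    obtain ⟨R, hRB, hRP, hRt⟩ := claim2 P ((hmem P).mp hPs)
    have hRs : R ∈ s := (hmem R).mpr hRB
    have hPf : P ∈ s.filter (fun R => phi Q R = t) := Finset.mem_filter.mpr ⟨hPs, hPt⟩
    have hRf : R ∈ s.filter (fun R => phi Q R = t) :=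
      Finset.mem_filter.mpr ⟨hRs, by rw [hRt, hPt]⟩
    have hle : 2 ≤ (s.filter (fun R => phi Q R = t)).card := by
      have hsub : ({P, R} : Finset _) ⊆ s.filter (fun R => phi Q R = t) := by
        intro x hx
        rcases Finset.mem_insert.mp hx with rfl | hx
        · exact hPf
        · rw [Finset.mem_singleton.mp hx]; exact hRf
      calc 2 = ({P, R} : Finset _).card := (Finset.card_pair (Ne.symm hRP)).symm
        _ ≤ _ := Finset.card_le_card hsub
    have hge : (s.filter (fun R => phi Q R = t)).card ≤ 2 := by
      by_contra hgt
      push_neg at hgt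
      obtain ⟨a, b, c, ha, hb, hc, hab, hac, hbc⟩ := Finset.two_lt_card_iff.mp hgt
      obtain ⟨has, hat⟩ := Finset.mem_filter.mp ha
      obtain ⟨hbs, hbt⟩ := Finset.mem_filter.mp hb
      obtain ⟨hcs, hct⟩ := Finset.mem_filter.mp hc
      exact claim3 a b c ((hmem a).mp has) ((hmem b).mp hbs) ((hmem c).mp hcs)
        hab hac hbc (hat.trans hbt.symm) (hat.trans hct.symm)
    omega
  have hsum : s.card = ∑ t ∈ s.image (phi Q), (s.filter (fun R => phi Q R = t)).card :=
    Finset.card_eq_sum_card_fiberwise (fun x hx => Finset.mem_image_of_mem _ hx)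
  have heven : s.card = 2 * (s.image (phi Q)).card := by
    rw [hsum, Finset.sum_congr rfl key, Finset.sum_const, smul_eq_mul, mul_comm]
  rw [hscard] at heven
  rw [Nat.odd_iff] at hq
  omega
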